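/- Let A, B ∈ (ℝ ∪ {-∞})^{n×m} and suppose that for every pair (i,j), at least one of A_{ij}, B_{ij} is finite. If λ ∈ σ(A,B) then for every row i there exists j with λ + B_{ij} ≥ A_{ij} (both sides interpreted in ℝ ∪ {-∞}), and for every row i there exists j with A_{ij} ≥ λ + B_{ij}. -/

import Mathlib

open Finset

/-- Max-plus matrix-vector product over `WithBot ℝ`. -/
def mpMul {n m : ℕ} (A : Fin n → Fin m → WithBot ℝ) (x : Fin m → WithBot ℝ) :
    Fin n → WithBot ℝ :=
  fun i => univ.sup fun j => A i j + x j

/-- If in each position at least one of `A_{ij}`, `B_{ij}` is finite and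
`λ ∈ σ(A,B)`, then in each row there is a `j` with `λ + B_{ij} ≥ A_{ij}`, and
in each row there is a `j` with `A_{ij} ≥ λ + B_{ij}`. -/
theorem spectrum_row_bounds {n m : ℕ} (A B : Fin n → Fin m → WithBot ℝ)
    (hfin : ∀ i j, A i j ≠ ⊥ ∨ B i j ≠ ⊥) (lam : ℝ)
    (hlam : ∃ x : Fin m → WithBot ℝ, (∃ j, x j ≠ ⊥) ∧
      mpMul A x = fun i => (lam : WithBot ℝ) + mpMul B x i) :
    (∀ i, ∃ j, A i j ≤ (lam : WithBot ℝ) + B i j) ∧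
    (∀ i, ∃ j, (lam : WithBot ℝ) + B i j ≤ A i j) := by
  obtain ⟨x, ⟨j₀, hj₀⟩, heq⟩ := hlam
  have hlamne : ((lam : WithBot ℝ)) ≠ ⊥ := WithBot.coe_ne_bot
  have key : ∀ i, univ.sup (fun j => A i j + x j)
      = (lam : WithBot ℝ) + univ.sup (fun j => B i j + x j) := fun i =>
    congrFun heq i
  have hne : (univ : Finset (Fin m)).Nonempty := ⟨j₀, mem_univ _⟩
  have hAne : ∀ i, univ.sup (fun j => A i j + x j) ≠ ⊥ := by
    intro i h
    have hB : univ.sup (fun j => B i j + x j) = ⊥ := by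
      have := (key i) ▸ h
      rcases WithBot.add_eq_bot.mp this with h' | h'
      · exact absurd h' hlamne
      · exact h'
    have hA0 : A i j₀ + x j₀ = ⊥ := by
      have := (Finset.sup_eq_bot_iff _ _).mp h j₀ (mem_univ _); exact this
    have hB0 : B i j₀ + x j₀ = ⊥ := by
      have := (Finset.sup_eq_bot_iff _ _).mp hB j₀ (mem_univ _); exact this
    rcases WithBot.add_eq_bot.mp hA0 with hA' | hA'
    · rcases WithBot.add_eq_bot.mp hB0 with hB' | hB'
      · rcases hfin i j₀ with h'' | h'' <;> [exact h'' hA'; exact h'' hB']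
      · exact hj₀ hB'
    · exact hj₀ hA'
  have hBne : ∀ i, univ.sup (fun j => B i j + x j) ≠ ⊥ := by
    intro i h
    exact hAne i (by rw [key i, h, WithBot.add_bot])
  constructor
  · intro i
    obtain ⟨j, _, hjsup⟩ := Finset.exists_mem_eq_sup univ hne (fun j => B i j + x j)
    have hxj : x j ≠ ⊥ := by
      intro h
      exact hBne i (by rw [hjsup, h, WithBot.add_bot])
    have hle : A i j + x j ≤ ((lam : WithBot ℝ) + B i j) + x j := by
      calc A i j + x j ≤ univ.sup (fun j => A i j + x j) :=
            Finset.le_sup (f := fun j => A i j + x j) (mem_univ j)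
        _ = (lam : WithBot ℝ) + univ.sup (fun j => B i j + x j) := key i
        _ = ((lam : WithBot ℝ) + B i j) + x j := by rw [hjsup, ← add_assoc]
    exact ⟨j, (WithBot.add_le_add_iff_right hxj).mp hle⟩
  · intro i
    obtain ⟨j, _, hjsup⟩ := Finset.exists_mem_eq_sup univ hne (fun j => A i j + x j)
    have hxj : x j ≠ ⊥ := by
      intro h
      exact hAne i (by rw [hjsup, h, WithBot.add_bot])
    have hle : ((lam : WithBot ℝ) + B i j) + x j ≤ A i j + x j := by
      calc ((lam : WithBot ℝ) + B i j) + x j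
          = (lam : WithBot ℝ) + (B i j + x j) := by rw [add_assoc]
        _ ≤ (lam : WithBot ℝ) + univ.sup (fun j => B i j + x j) :=
            add_le_add_right (Finset.le_sup (f := fun j => B i j + x j) (mem_univ j)) _
        _ = univ.sup (fun j => A i j + x j) := (key i).symm
        _ = A i j + x j := hjsup
    exact ⟨j, (WithBot.add_le_add_iff_right hxj).mp hle⟩
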